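/- For every real q > 1, the diameter of the metric space (ℤ, d_q) equals 1/(q(q−1)), and this diameter is realized by any two successive integers: d_q(k+1, k) = 1/(q(q−1)) for all k ∈ ℤ. -/

import Mathlib

/-- The q-norm of an integer n: sum of 1/q^k over positive integers k not dividing n. -/
noncomputable def qnorm (q : ℝ) (n : ℤ) : ℝ :=
  ∑' k : ℕ, if 1 ≤ k ∧ ¬ ((k : ℤ) ∣ n) then 1 / q ^ k else 0

lemma qinv_lt_one {q : ℝ} (hq : 1 < q) : q⁻¹ < 1 := by
  rw [inv_lt_one_iff₀]; right; exact hq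

lemma qnorm_summable (q : ℝ) (hq : 1 < q) (n : ℤ) :
    Summable (fun k : ℕ => if 1 ≤ k ∧ ¬ ((k : ℤ) ∣ n) then 1 / q ^ k else 0) := by
  have hq0 : (0:ℝ) < q := lt_trans one_pos hq
  have hgeo : Summable fun k : ℕ => q⁻¹ ^ k :=
    summable_geometric_of_lt_one (by positivity) (qinv_lt_one hq)
  refine Summable.of_nonneg_of_le (fun k => ?_) (fun k => ?_) hgeo
  · split <;> positivity
  · split
    · rw [one_div, inv_pow]
    · positivity

lemma qnorm_one (q : ℝ) (hq : 1 < q) : qnorm q 1 = 1 / (q * (q - 1)) := by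
  have hq0 : (0:ℝ) < q := lt_trans one_pos hq
  have hs := qnorm_summable q hq 1
  set f : ℕ → ℝ := fun k => if 1 ≤ k ∧ ¬ ((k : ℤ) ∣ 1) then 1 / q ^ k else 0 with hf
  have hs1 : Summable (fun k : ℕ => f (k + 1)) := (summable_nat_add_iff 1).mpr hs
  have h0 : f 0 = 0 := by simp [hf]
  have h1 : f 1 = 0 := by simp [hf]
  have h2 : ∀ k : ℕ, f (k + 2) = q⁻¹ ^ (k + 2) := by
    intro k
    have : ¬ ((k + 2 : ℤ) ∣ 1) := by
      intro h
      have := Int.le_of_dvd one_pos h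
      omega
    simp only [hf]
    rw [if_pos]
    · rw [one_div, inv_pow]
    · constructor
      · omega
      · push_cast
        exact this
  have key : qnorm q 1 = ∑' k : ℕ, q⁻¹ ^ (k + 2) := by
    unfold qnorm
    rw [Summable.tsum_eq_zero_add hs, h0, zero_add, Summable.tsum_eq_zero_add hs1, h1, zero_add]
    exact tsum_congr fun k => h2 k
  rw [key]
  have hgeo : ∑' k : ℕ, q⁻¹ ^ k = (1 - q⁻¹)⁻¹ :=
    tsum_geometric_of_lt_one (by positivity) (qinv_lt_one hq)
  have : ∑' k : ℕ, q⁻¹ ^ (k + 2) = q⁻¹ ^ 2 * (1 - q⁻¹)⁻¹ := by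
    simp_rw [pow_add, mul_comm (q⁻¹ ^ _) (q⁻¹ ^ 2)]
    rw [tsum_mul_left, hgeo]
  rw [this]
  have hqne : q ≠ 0 := ne_of_gt hq0
  have hq1 : q - 1 ≠ 0 := by linarith
  field_simp

lemma qnorm_le (q : ℝ) (hq : 1 < q) (n : ℤ) : qnorm q n ≤ qnorm q 1 := by
  have hq0 : (0:ℝ) < q := lt_trans one_pos hq
  refine Summable.tsum_le_tsum (fun k => ?_) (qnorm_summable q hq n) (qnorm_summable q hq 1)
  by_cases h : 1 ≤ k ∧ ¬ ((k : ℤ) ∣ n)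
  · rw [if_pos h, if_pos]
    refine ⟨h.1, fun hd => ?_⟩
    have hk1 : (k : ℤ) = 1 := by
      have := Int.le_of_dvd one_pos hd
      have : (1:ℤ) ≤ (k:ℤ) := by exact_mod_cast h.1
      omega
    exact h.2 (hk1 ▸ one_dvd n)
  · rw [if_neg h]
    split <;> positivity

theorem stmt_6 (q : ℝ) (hq : 1 < q) :
    IsGreatest {r : ℝ | ∃ m n : ℤ, r = qnorm q (m - n)} (1 / (q * (q - 1))) ∧
    (∀ k : ℤ, qnorm q ((k + 1) - k) = 1 / (q * (q - 1))) := by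
  constructor
  · constructor
    · exact ⟨1, 0, by rw [sub_zero, qnorm_one q hq]⟩
    · rintro r ⟨m, n, rfl⟩
      rw [← qnorm_one q hq]
      exact qnorm_le q hq (m - n)
  · intro k
    rw [add_sub_cancel_left, qnorm_one q hq]
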